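/- arXiv:2307.05530 — 4 statements merged into one kernel-verified Lean document; each statement's English description precedes it below -/
import Mathlib

section
/- The function g(t) := log( (1+2t)^{1+2t} / ( (1+t)^{1+t} (4t)^t ) ) is strictly positive and strictly increasing on (0, ∞). -/
noncomputable def gfun (t : ℝ) : ℝ :=
  (1 + 2 * t) * Real.log (1 + 2 * t) - (1 + t) * Real.log (1 + t) - t * Real.log (4 * t)

lemma gfun_eq : gfun = fun t =>
    (1 + 2 * t) * Real.log (1 + 2 * t) - (1 + t) * Real.log (1 + t)
      - (4 * t) * Real.log (4 * t) / 4 := by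
  funext t; simp [gfun]; ring

lemma gfun_continuous : Continuous gfun := by
  rw [gfun_eq]
  have h := Real.continuous_mul_log
  fun_prop

lemma gfun_hasDeriv (t : ℝ) (ht : 0 < t) :
    HasDerivAt gfun (2 * Real.log (1 + 2 * t) - Real.log (1 + t) - Real.log (4 * t)) t := by
  have h1 : (0:ℝ) < 1 + 2 * t := by linarith
  have h2 : (0:ℝ) < 1 + t := by linarith
  have h3 : (0:ℝ) < 4 * t := by linarith
  have du1 : HasDerivAt (fun t : ℝ => 1 + 2 * t) 2 t := by
    simpa using ((hasDerivAt_id t).const_mul 2).const_add 1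
  have du2 : HasDerivAt (fun t : ℝ => 1 + t) 1 t := by
    simpa using (hasDerivAt_id t).const_add 1
  have du3 : HasDerivAt (fun t : ℝ => 4 * t) 4 t := by
    simpa using (hasDerivAt_id t).const_mul 4
  have dl1 : HasDerivAt (fun t : ℝ => Real.log (1 + 2 * t)) (2 / (1 + 2 * t)) t := by
    simpa [div_eq_inv_mul, Function.comp_def] using (Real.hasDerivAt_log h1.ne').comp t du1
  have dl2 : HasDerivAt (fun t : ℝ => Real.log (1 + t)) (1 / (1 + t)) t := by
    simpa [div_eq_inv_mul, Function.comp_def] using (Real.hasDerivAt_log h2.ne').comp t du2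
  have dl3 : HasDerivAt (fun t : ℝ => Real.log (4 * t)) (4 / (4 * t)) t := by
    simpa [div_eq_inv_mul, Function.comp_def] using (Real.hasDerivAt_log h3.ne').comp t du3
  have D := ((du1.mul dl1).sub (du2.mul dl2)).sub ((hasDerivAt_id t).mul dl3)
  have : gfun = fun t : ℝ => ((1 + 2 * t) * Real.log (1 + 2 * t)
      - (1 + t) * Real.log (1 + t)) - t * Real.log (4 * t) := by
    funext x; simp [gfun]
  rw [this]
  convert D using 1
  · rfl
  · rfl
  · funext x; simp
  simp only [id]; field_simp
  ring

lemma gfun_deriv_pos (t : ℝ) (ht : 0 < t) :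
    0 < 2 * Real.log (1 + 2 * t) - Real.log (1 + t) - Real.log (4 * t) := by
  have h1 : (0:ℝ) < 1 + 2 * t := by linarith
  have h2 : (0:ℝ) < 1 + t := by linarith
  have h3 : (0:ℝ) < 4 * t := by linarith
  have key : Real.log ((1 + t) * (4 * t)) < Real.log ((1 + 2 * t) ^ 2) := by
    apply Real.log_lt_log (by positivity)
    nlinarith
  rw [Real.log_mul h2.ne' h3.ne', Real.log_pow] at key
  push_cast at key
  linarith

lemma gfun_mono : StrictMonoOn gfun (Set.Ioi 0) := by
  apply strictMonoOn_of_deriv_pos (convex_Ioi 0) gfun_continuous.continuousOn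
  intro x hx
  rw [interior_Ioi] at hx
  rw [(gfun_hasDeriv x hx).deriv]
  exact gfun_deriv_pos x hx

theorem gfun_pos_strictMono :
    (∀ t : ℝ, 0 < t → 0 < gfun t) ∧ StrictMonoOn gfun (Set.Ioi 0) := by
  refine ⟨fun t ht => ?_, gfun_mono⟩
  have h0 : gfun 0 = 0 := by simp [gfun]
  have hle : gfun 0 ≤ gfun (t / 2) := by
    have := gfun_continuous.continuousOn.mono (Set.subset_univ (Set.Icc 0 (t/2)))
    have hmono : StrictMonoOn gfun (Set.Ici 0) := by
      apply strictMonoOn_of_deriv_pos (convex_Ici 0) gfun_continuous.continuousOn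
      intro x hx
      rw [interior_Ici] at hx
      rw [(gfun_hasDeriv x hx).deriv]
      exact gfun_deriv_pos x hx
    exact (hmono.monotoneOn) (by simp) (by simp; positivity) (by positivity)
  have hlt : gfun (t / 2) < gfun t :=
    gfun_mono (by simp; positivity) (by simpa using ht) (by linarith)
  linarith [h0 ▸ hle]
end

section
/- As λ → ∞, g(λ) = log 2 − 1/(4λ) + O(1/λ²); more precisely, there exist constants C, λ₀ > 0 such that |g(λ) − log 2 + 1/(4λ)| ≤ C/λ² for all λ ≥ λ₀. -/
lemma key_taylor (u : ℝ) (hu : 0 < u) (hu2 : u ≤ 1/2) :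
    |(1 + 1/u) * Real.log (1 + u) - 1 - u/2| ≤ 3 * u^2 := by
  have habs : |(-u)| < 1 := by rw [abs_neg, abs_of_pos hu]; linarith
  have h := Real.abs_log_sub_add_sum_range_le habs 3
  rw [abs_neg, abs_of_pos hu] at h
  have hsum : (∑ i ∈ Finset.range 3, (-u) ^ (i + 1) / (i + 1)) = -u + u^2/2 - u^3/3 := by
    simp [Finset.sum_range_succ]; ring
  rw [hsum] at h
  have hlog : (1 : ℝ) - -u = 1 + u := by ring
  rw [hlog] at h
  set E := Real.log (1 + u) - (u - u^2/2 + u^3/3) with hE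
  have hEeq : -u + u^2/2 - u^3/3 + Real.log (1 + u) = E := by rw [hE]; ring
  rw [hEeq] at h
  have hden : (1:ℝ)/2 ≤ 1 - u := by linarith
  have hEle : |E| ≤ 2 * u^4 := by
    have : u ^ (3+1) / (1 - u) ≤ 2 * u^4 := by
      rw [div_le_iff₀ (by linarith : (0:ℝ) < 1 - u)]
      have h4 : u ^ (3+1) = u^4 := by ring
      rw [h4]
      nlinarith [pow_pos hu 4]
    linarith
  have hlogeq : Real.log (1 + u) = (u - u^2/2 + u^3/3) + E := by rw [hE]; ring
  have hmain : (1 + 1/u) * Real.log (1 + u) - 1 - u/2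
      = (-u^2/6 + u^3/3) + (1 + 1/u) * E := by
    rw [hlogeq]; field_simp; ring
  rw [hmain]
  have h1 : |(-u^2/6 + u^3/3)| ≤ u^2/6 + u^3/3 := by
    calc |(-u^2/6 + u^3/3)| ≤ |(-u^2/6)| + |u^3/3| := abs_add_le _ _
    _ = u^2/6 + u^3/3 := by
        rw [abs_div, abs_div, abs_neg]
        rw [abs_of_nonneg (by positivity : (0:ℝ) ≤ u^2), abs_of_nonneg (by positivity : (0:ℝ) ≤ u^3)]
        norm_num
  have h2 : |(1 + 1/u) * E| ≤ (1 + 1/u) * (2 * u^4) := by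
    rw [abs_mul, abs_of_pos (by positivity : (0:ℝ) < 1 + 1/u)]
    exact mul_le_mul_of_nonneg_left hEle (by positivity)
  have h3 : (1 + 1/u) * (2 * u^4) = 2 * u^4 + 2 * u^3 := by field_simp
  calc |(-u^2/6 + u^3/3) + (1 + 1/u) * E| ≤ |(-u^2/6 + u^3/3)| + |(1 + 1/u) * E| := abs_add_le _ _
  _ ≤ (u^2/6 + u^3/3) + (2 * u^4 + 2 * u^3) := by rw [h3] at h2; linarith
  _ ≤ 3 * u^2 := by nlinarith [sq_nonneg u, pow_pos hu 2, pow_pos hu 3]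

theorem gfun_asymp_infty :
    ∃ C lam₀ : ℝ, 0 < C ∧ 0 < lam₀ ∧ ∀ lam : ℝ, lam₀ ≤ lam →
      |gfun lam - Real.log 2 + 1 / (4 * lam)| ≤ C / lam ^ 2 := by
  refine ⟨4, 2, by norm_num, by norm_num, fun lam hlam => ?_⟩
  have ht : (0:ℝ) < lam := by linarith
  set u := 1 / (2 * lam) with hu
  set v := 1 / lam with hv
  have hupos : 0 < u := by positivity
  have hvpos : 0 < v := by positivity
  have hule : u ≤ 1/2 := by
    rw [hu, div_le_div_iff₀ (by linarith) (by norm_num)]; linarith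
  have hvle : v ≤ 1/2 := by
    rw [hv, div_le_div_iff₀ ht (by norm_num)]; linarith
  have k1 := key_taylor u hupos hule
  have k2 := key_taylor v hvpos hvle
  -- identity
  have hlog2t : Real.log (1 + 2 * lam) = Real.log 2 + Real.log lam + Real.log (1 + u) := by
    have : (1 + 2 * lam) = 2 * lam * (1 + u) := by
      rw [hu]; field_simp; ring
    rw [this, Real.log_mul (by positivity) (by positivity),
        Real.log_mul (by norm_num) ht.ne']
  have hlogt : Real.log (1 + lam) = Real.log lam + Real.log (1 + v) := by
    have : (1 + lam) = lam * (1 + v) := by rw [hv]; field_simp; ring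
    rw [this, Real.log_mul ht.ne' (by positivity)]
  have hlog4t : Real.log (4 * lam) = 2 * Real.log 2 + Real.log lam := by
    rw [Real.log_mul (by norm_num) ht.ne', show (4:ℝ) = 2^2 by norm_num,
        Real.log_pow]
    push_cast; ring
  have hiu : 1 + 1/u = 1 + 2 * lam := by rw [hu]; field_simp
  have hiv : 1 + 1/v = 1 + lam := by rw [hv]; field_simp
  have hid : gfun lam - Real.log 2 + 1 / (4 * lam)
      = ((1 + 1/u) * Real.log (1 + u) - 1 - u/2)
        - ((1 + 1/v) * Real.log (1 + v) - 1 - v/2) := by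
    rw [hiu, hiv]
    unfold gfun
    rw [hlog2t, hlogt, hlog4t, hu, hv]
    field_simp
    ring
  rw [hid]
  have tri : |((1 + 1/u) * Real.log (1 + u) - 1 - u/2)
        - ((1 + 1/v) * Real.log (1 + v) - 1 - v/2)| ≤ 3 * u^2 + 3 * v^2 := by
    calc _ ≤ |(1 + 1/u) * Real.log (1 + u) - 1 - u/2|
            + |(1 + 1/v) * Real.log (1 + v) - 1 - v/2| := abs_sub _ _
    _ ≤ 3 * u^2 + 3 * v^2 := add_le_add k1 k2
  have hfin : 3 * u^2 + 3 * v^2 ≤ 4 / lam^2 := by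
    have heq : 3 * u^2 + 3 * v^2 = 15 / (4 * lam^2) := by
      rw [hu, hv]; field_simp; ring
    rw [heq, div_le_div_iff₀ (by positivity) (by positivity)]
    nlinarith [pow_pos ht 2]
  linarith
end

section
/- Let ξ : (1, ∞) → (0, ∞) be defined implicitly by e^{ξ(t)} = 1 + t·ξ(t), ξ(t) > 0. Then ξ is strictly increasing, and ξ(t) ≤ log t + log log t + O(1) as t → ∞; moreover ξ(t) ≥ log t for all t ≥ e. -/
/-- Monotonicity of `(exp x - 1)/x`, in multiplied form. -/
lemma xi_aux_mono (x y : ℝ) (hy : 0 < y) (hyx : y ≤ x) :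
    x * (Real.exp y - 1) ≤ y * (Real.exp x - 1) := by
  have hx : 0 < x := hy.trans_le hyx
  have ha : (0:ℝ) ≤ y / x := by positivity
  have hb : (0:ℝ) ≤ 1 - y / x := by
    have : y / x ≤ 1 := (div_le_one hx).2 hyx
    linarith
  have hab : y / x + (1 - y / x) = 1 := by ring
  have h := convexOn_exp.2 (Set.mem_univ x) (Set.mem_univ 0) ha hb hab
  simp only [smul_eq_mul, mul_zero, add_zero, Real.exp_zero, mul_one] at h
  have hax : y / x * x = y := div_mul_cancel₀ _ hx.ne'
  rw [hax] at h
  have h2 := mul_le_mul_of_nonneg_left h hx.le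
  have hax2 : x * (y / x * Real.exp x + (1 - y / x)) = y * Real.exp x + x - y := by
    field_simp; ring
  rw [hax2] at h2
  linarith

theorem xi_monotone_and_size (ξ : ℝ → ℝ)
    (hξ : ∀ t : ℝ, 1 < t → 0 < ξ t ∧ Real.exp (ξ t) = 1 + t * ξ t) :
    StrictMonoOn ξ (Set.Ioi (1 : ℝ)) ∧
      (∃ C t₀ : ℝ, 1 < t₀ ∧ ∀ t : ℝ, t₀ ≤ t →
        ξ t ≤ Real.log t + Real.log (Real.log t) + C) ∧
      (∀ t : ℝ, Real.exp 1 ≤ t → Real.log t ≤ ξ t) := by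
  refine ⟨?_, ?_, ?_⟩
  · intro a ha b hb hab
    by_contra hcon
    push_neg at hcon
    obtain ⟨hpa, hea⟩ := hξ a ha
    obtain ⟨hpb, heb⟩ := hξ b hb
    have := xi_aux_mono (ξ a) (ξ b) hpb hcon
    rw [hea, heb] at this
    nlinarith [mul_pos hpa hpb]
  · refine ⟨2, Real.exp 2, ?_, ?_⟩
    · have := Real.add_one_lt_exp (by norm_num : (2:ℝ) ≠ 0)
      linarith
    · intro t ht
      have he2 : (7:ℝ) < Real.exp 2 := by
        have h1 := Real.exp_one_gt_d9
        have : Real.exp 2 = Real.exp 1 * Real.exp 1 := by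
          rw [← Real.exp_add]; norm_num
        nlinarith
      have ht1 : (1:ℝ) < t := by linarith
      have ht0 : (0:ℝ) < t := by linarith
      have hlog2 : (2:ℝ) ≤ Real.log t := (Real.le_log_iff_exp_le ht0).2 ht
      have hlogpos : 0 < Real.log t := by linarith
      obtain ⟨hp, he⟩ := hξ t ht1
      set x := Real.log t + Real.log (Real.log t) + 2 with hxdef
      have hexpx : Real.exp x = t * Real.log t * Real.exp 2 := by
        rw [hxdef, Real.exp_add, Real.exp_add, Real.exp_log ht0,
          Real.exp_log hlogpos]
      have hll : Real.log (Real.log t) ≤ Real.log t := by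
        have := Real.log_le_sub_one_of_pos hlogpos
        linarith
      have hllpos : 0 < Real.log (Real.log t) := by
        have : (1:ℝ) < Real.log t := by linarith
        exact Real.log_pos this
      have hxpos : 0 < x := by rw [hxdef]; linarith
      have hkey : 1 + t * x < Real.exp x := by
        rw [hexpx, hxdef]
        have h1 : (1:ℝ) ≤ t * Real.log t := by nlinarith
        nlinarith [mul_le_mul_of_nonneg_left hll ht0.le,
          mul_le_mul_of_nonneg_left hlog2 ht0.le]
      by_contra hcon
      push_neg at hcon
      have hm := xi_aux_mono (ξ t) x hxpos hcon.le
      rw [he] at hm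
      nlinarith [mul_pos hp ht0, mul_pos hxpos ht0]
  · intro t ht
    have he1 : (1:ℝ) < Real.exp 1 := by
      have := Real.add_one_lt_exp (by norm_num : (1:ℝ) ≠ 0); linarith
    have ht1 : (1:ℝ) < t := lt_of_lt_of_le he1 ht
    have ht0 : (0:ℝ) < t := by linarith
    have hlog1 : (1:ℝ) ≤ Real.log t := (Real.le_log_iff_exp_le ht0).2 ht
    obtain ⟨hp, he⟩ := hξ t ht1
    by_contra hcon
    push_neg at hcon
    have hlogpos : 0 < Real.log t := by linarith
    have hm := xi_aux_mono (Real.log t) (ξ t) hp hcon.le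
    rw [he, Real.exp_log ht0] at hm
    nlinarith [mul_le_mul_of_nonneg_right hlog1 (mul_pos ht0 hp).le]
end

section
/- Let d ≥ 2 be an integer with ω(d) distinct prime factors, and let p_k denote the k-th prime. Then for every real z ≥ 1, the number of divisors t of d with t ≤ z is at most Ψ(z, p_{ω(d)}), the number of p_{ω(d)}-friable integers up to z. -/
/-- n is y-friable: every prime factor of n is at most y. -/
def FriableNat (n y : ℕ) : Prop := ∀ p : ℕ, p.Prime → p ∣ n → p ≤ y

open Classical

namespace DF

noncomputable def idx (S : Finset ℕ) (q : ℕ) : ℕ := (S.filter (· < q)).card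

noncomputable def g (S : Finset ℕ) (q : ℕ) : ℕ := Nat.nth Nat.Prime (idx S q)

lemma g_prime (S : Finset ℕ) (q : ℕ) : (g S q).Prime :=
  Nat.prime_nth_prime _

lemma idx_lt_card (S : Finset ℕ) {q : ℕ} (hq : q ∈ S) : idx S q < S.card := by
  apply Finset.card_lt_card
  constructor
  · exact Finset.filter_subset _ _
  · intro h
    have := h hq
    simp at this

lemma idx_strictMono (S : Finset ℕ) {q q' : ℕ} (hq : q ∈ S) (h : q < q') :
    idx S q < idx S q' := by
  apply Finset.card_lt_card
  rw [Finset.ssubset_def]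
  refine ⟨Finset.monotone_filter_right S (fun x _ hx => lt_trans hx h), fun hcon => ?_⟩
  have := hcon (Finset.mem_filter.2 ⟨hq, h⟩)
  simp at this

lemma g_injOn (S : Finset ℕ) : Set.InjOn (g S) S := by
  intro a ha b hb hab
  by_contra hne
  rcases lt_or_gt_of_ne hne with h | h
  · exact absurd hab (Nat.ne_of_lt (Nat.nth_lt_nth Nat.infinite_setOf_prime |>.2
      (idx_strictMono S ha h)))
  · exact absurd hab.symm (Nat.ne_of_lt (Nat.nth_lt_nth Nat.infinite_setOf_prime |>.2
      (idx_strictMono S hb h)))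

lemma g_le (S : Finset ℕ) (hS : ∀ q ∈ S, q.Prime) {q : ℕ} (hq : q ∈ S) : g S q ≤ q := by
  have hcount : idx S q < Nat.count Nat.Prime (q + 1) := by
    have hle : (insert q (S.filter (· < q))).card ≤ Nat.count Nat.Prime (q + 1) := by
      rw [Nat.count_eq_card_filter_range]
      apply Finset.card_le_card
      intro x hx
      rcases Finset.mem_insert.1 hx with rfl | hx
      · exact Finset.mem_filter.2 ⟨Finset.mem_range.2 (Nat.lt_succ_self _), hS _ hq⟩
      · rcases Finset.mem_filter.1 hx with ⟨hxS, hxq⟩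
        exact Finset.mem_filter.2 ⟨Finset.mem_range.2 (by omega), hS _ hxS⟩
    rw [Finset.card_insert_of_notMem (by simp)] at hle
    unfold idx
    omega
  have := Nat.nth_lt_of_lt_count hcount
  unfold g
  omega

/-- the pushed-forward divisor -/
noncomputable def F (S : Finset ℕ) (t : ℕ) : ℕ :=
  t.factorization.prod (fun q a => (g S q) ^ a)

lemma F_ne_zero (S : Finset ℕ) (t : ℕ) : F S t ≠ 0 := by
  unfold F
  apply Finset.prod_ne_zero_iff.2
  intro q _
  exact pow_ne_zero _ (g_prime S q).pos.ne'

lemma F_le (S : Finset ℕ) (hS : ∀ q ∈ S, q.Prime) {t : ℕ} (ht : t ≠ 0)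
    (hsub : t.primeFactors ⊆ S) : F S t ≤ t := by
  conv_rhs => rw [← Nat.factorization_prod_pow_eq_self ht]
  unfold F
  apply Finset.prod_le_prod'
  intro q hq
  have hqS : q ∈ S := hsub (by rwa [Nat.support_factorization] at hq)
  exact Nat.pow_le_pow_left (g_le S hS hqS) _

lemma F_friable (S : Finset ℕ) {t : ℕ} (hsub : t.primeFactors ⊆ S) :
    FriableNat (F S t) (Nat.nth Nat.Prime (S.card - 1)) := by
  intro p hp hdvd
  unfold F at hdvd
  rcases hp.prime.exists_mem_finset_dvd hdvd with ⟨q, hq, hpq⟩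
  have hqS : q ∈ S := hsub (by rwa [Nat.support_factorization] at hq)
  have hpg : p = g S q := ((Nat.prime_dvd_prime_iff_eq hp (g_prime S q)).1
    (hp.dvd_of_dvd_pow hpq))
  rw [hpg]
  unfold g
  apply (Nat.nth_le_nth Nat.infinite_setOf_prime).2
  have := idx_lt_card S hqS
  omega

lemma F_factorization (S : Finset ℕ) {t : ℕ} (ht : t ≠ 0) (hsub : t.primeFactors ⊆ S)
    {q : ℕ} (hq : q ∈ t.primeFactors) :
    (F S t).factorization (g S q) = t.factorization q := by
  unfold F
  rw [Finsupp.prod, Nat.factorization_prod (fun q _ => pow_ne_zero _ (g_prime S q).pos.ne')]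
  rw [Finset.sum_apply']
  rw [Finset.sum_eq_single q]
  · rw [Nat.Prime.factorization_pow (g_prime S q), Finsupp.single_eq_same]
  · intro b hb hbq
    rw [Nat.Prime.factorization_pow (g_prime S b), Finsupp.single_eq_of_ne']
    intro h
    exact hbq (g_injOn S (hsub (by rwa [Nat.support_factorization] at hb)) (hsub hq) h)
  · intro h
    rw [← Nat.support_factorization] at hq
    exact absurd hq h

lemma F_injOn (S : Finset ℕ) {t₁ t₂ : ℕ} (h1 : t₁ ≠ 0) (h2 : t₂ ≠ 0)
    (hs1 : t₁.primeFactors ⊆ S) (hs2 : t₂.primeFactors ⊆ S) (h : F S t₁ = F S t₂) :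
    t₁ = t₂ := by
  have key : ∀ q : ℕ, t₁.factorization q = t₂.factorization q := by
    intro q
    by_cases hq1 : q ∈ t₁.primeFactors
    · have e1 := F_factorization S h1 hs1 hq1
      by_cases hq2 : q ∈ t₂.primeFactors
      · rw [← e1, h, F_factorization S h2 hs2 hq2]
      · exfalso
        have h0 : t₂.factorization q = 0 := by
          rw [← Nat.support_factorization] at hq2
          exact Finsupp.notMem_support_iff.1 hq2
        -- (F S t₂).factorization (g S q) = 0 since g S q not among g of t₂'s factors?
        have hpos : 0 < (F S t₂).factorization (g S q) := by
          rw [← h, e1]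
          have := Nat.support_factorization t₁ ▸ hq1
          exact Nat.pos_of_ne_zero (Finsupp.mem_support_iff.1 (by rwa [Nat.support_factorization]))
        have hdvd : g S q ∣ F S t₂ := by
          have := Nat.Prime.dvd_iff_one_le_factorization (g_prime S q) (F_ne_zero S t₂)
          exact this.2 hpos
        unfold F at hdvd
        rcases (g_prime S q).prime.exists_mem_finset_dvd hdvd with ⟨b, hb, hpb⟩
        have hbS : b ∈ S := hs2 (by rwa [Nat.support_factorization] at hb)
        have : g S q = g S b := (Nat.prime_dvd_prime_iff_eq (g_prime S q) (g_prime S b)).1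
          ((g_prime S q).dvd_of_dvd_pow hpb)
        have hqb : q = b := g_injOn S (hs1 hq1) hbS this
        subst hqb
        exact hq2 (by rwa [Nat.support_factorization] at hb)
    · by_cases hq2 : q ∈ t₂.primeFactors
      · -- symmetric
        have e2 := F_factorization S h2 hs2 hq2
        exfalso
        have hpos : 0 < (F S t₁).factorization (g S q) := by
          rw [h, e2]
          exact Nat.pos_of_ne_zero (Finsupp.mem_support_iff.1 (by rwa [Nat.support_factorization]))
        have hdvd : g S q ∣ F S t₁ := by
          exact (Nat.Prime.dvd_iff_one_le_factorization (g_prime S q) (F_ne_zero S t₁)).2 hpos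
        unfold F at hdvd
        rcases (g_prime S q).prime.exists_mem_finset_dvd hdvd with ⟨b, hb, hpb⟩
        have hbS : b ∈ S := hs1 (by rwa [Nat.support_factorization] at hb)
        have : g S q = g S b := (Nat.prime_dvd_prime_iff_eq (g_prime S q) (g_prime S b)).1
          ((g_prime S q).dvd_of_dvd_pow hpb)
        have hqb : q = b := g_injOn S (hs2 hq2) hbS this
        subst hqb
        exact hq1 (by rwa [Nat.support_factorization] at hb)
      · rw [← Nat.support_factorization] at hq1 hq2
        rw [Finsupp.notMem_support_iff.1 hq1, Finsupp.notMem_support_iff.1 hq2]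
  exact Nat.eq_of_factorization_eq h1 h2 key

end DF

open Classical in
theorem divisors_le_friable_count (d : ℕ) (hd : 2 ≤ d) (z : ℝ) (hz : 1 ≤ z) :
    (d.divisors.filter (fun t => (t : ℝ) ≤ z)).card ≤
      ((Finset.Icc 1 ⌊z⌋₊).filter
        (fun n => FriableNat n (Nat.nth Nat.Prime (d.primeFactors.card - 1)))).card := by
  classical
  simp only [Finset.bind_def, Finset.pure_def, Finset.sup_singleton_apply, Finset.filter_image,
    Finset.card_image_of_injective _ Nat.cast_injective]
  set S := d.primeFactors with hSdef
  have hS : ∀ q ∈ S, q.Prime := fun q hq => Nat.prime_of_mem_primeFactors hq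
  apply Finset.card_le_card_of_injOn (DF.F S)
  · intro t ht
    rcases Finset.mem_filter.1 ht with ⟨htd, htz⟩
    have htdvd : t ∣ d := (Nat.mem_divisors.1 htd).1
    have ht0 : t ≠ 0 := by
      rintro rfl
      exact absurd (Nat.eq_zero_of_zero_dvd htdvd) (by omega)
    have hsub : t.primeFactors ⊆ S := Nat.primeFactors_mono htdvd (by omega)
    refine Finset.mem_filter.2 ⟨Finset.mem_Icc.2 ⟨Nat.one_le_iff_ne_zero.2 (DF.F_ne_zero S t), ?_⟩,
      DF.F_friable S hsub⟩
    calc DF.F S t ≤ t := DF.F_le S hS ht0 hsub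
      _ ≤ ⌊z⌋₊ := Nat.le_floor htz
  · intro t₁ h₁ t₂ h₂ heq
    rcases Finset.mem_filter.1 h₁ with ⟨h1d, _⟩
    rcases Finset.mem_filter.1 h₂ with ⟨h2d, _⟩
    have hd0 : d ≠ 0 := by omega
    have t1d := (Nat.mem_divisors.1 h1d).1
    have t2d := (Nat.mem_divisors.1 h2d).1
    have h10 : t₁ ≠ 0 := fun h => hd0 (Nat.eq_zero_of_zero_dvd (h ▸ t1d))
    have h20 : t₂ ≠ 0 := fun h => hd0 (Nat.eq_zero_of_zero_dvd (h ▸ t2d))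
    exact DF.F_injOn S h10 h20 (Nat.primeFactors_mono t1d hd0) (Nat.primeFactors_mono t2d hd0) heq
end
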